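/- There exist finite simple graphs G1, G2, vertices v1 ∈ G1, v2 ∈ G2, and integers K > 1 and L, such that the K-hop shortest-path-distance color refinement assigns v1 and v2 different colors at iteration L, while DE-1 assigns v1 and v2 equal representations at every iteration. Conversely, there exist finite simple graphs G1', G2' and vertices v1' ∈ G1', v2' ∈ G2' such that DE-1 assigns v1' and v2' different representations at some iteration, while for every K and every iteration the K-hop shortest-path-distance color refinement assigns v1' and v2' equal colors. -/

import Mathlib

/-!
STATEMENT 9: Node-level incomparability of K-hop spd color refinement and DE-1
(Distance Encoding): there are vertices separated by K-hop refinement but not by DE-1,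
and vertices separated by DE-1 but never by K-hop refinement for any K.
-/

namespace KHopStmt9

/-- k-th hop neighbors under the shortest-path-distance kernel: vertices at graph
distance exactly `k` from `v`. -/
noncomputable def Qspd {V : Type*} [Fintype V] (G : SimpleGraph V) (v : V) (k : ℕ) :
    Finset V := by
  classical
  exact Finset.univ.filter fun u => G.Reachable v u ∧ G.dist v u = k

/-- K-hop color refinement with the spd kernel: all vertices share the constant initial
color, and `c_{l+1}(v) = (c_l(v), ({{c_l(u) : u ∈ Q^{k,spd}_v}})_{k=1,…,K})`, multiset
equality being expressed by color-preserving bijections of the hop neighborhoods. -/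
def KhopEquiv {V1 V2 : Type*} [Fintype V1] [Fintype V2] (K : ℕ)
    (G1 : SimpleGraph V1) (G2 : SimpleGraph V2) : ℕ → V1 → V2 → Prop
  | 0, _, _ => True
  | (l + 1), v, u => KhopEquiv K G1 G2 l v u ∧
      ∀ k : ℕ, 1 ≤ k → k ≤ K →
        ∃ σ : {w // w ∈ Qspd G1 v k} ≃ {w // w ∈ Qspd G2 u k},
          ∀ w : {w // w ∈ Qspd G1 v k}, KhopEquiv K G1 G2 l w.1 (σ w).1

/-- DE-1 color refinement relative to target vertices `v1` (in `G1`) and `v2` (in `G2`):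
1-WL refinement started from the initial coloring "graph distance to the target vertex"
(with unreachable vertices, having infinite distance, distinguished from any reachable
vertex). `DE1Equiv G1 v1 G2 v2 l u1 u2` says that `u1` and `u2` receive equal colors at
iteration `l`. -/
def DE1Equiv {V1 V2 : Type*} (G1 : SimpleGraph V1) (v1 : V1)
    (G2 : SimpleGraph V2) (v2 : V2) : ℕ → V1 → V2 → Prop
  | 0, u1, u2 => G1.dist v1 u1 = G2.dist v2 u2 ∧ (G1.Reachable v1 u1 ↔ G2.Reachable v2 u2)
  | (l + 1), u1, u2 => DE1Equiv G1 v1 G2 v2 l u1 u2 ∧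
      ∃ σ : G1.neighborSet u1 ≃ G2.neighborSet u2,
        ∀ w : G1.neighborSet u1, DE1Equiv G1 v1 G2 v2 l w.1 (σ w).1

open SimpleGraph Finset

variable {V : Type*}

/- ### distance helper lemmas -/

lemma adj_chain_of_walk_length_two {G : SimpleGraph V} {x y : V}
    (p : G.Walk x y) (hp : p.length = 2) : ∃ z, G.Adj x z ∧ G.Adj z y := by
  cases p with
  | nil => simp at hp
  | cons h q =>
    cases q with
    | nil => simp at hp
    | cons h' q' =>
      cases q' with
      | nil => exact ⟨_, h, h'⟩
      | cons h'' q'' => simp [SimpleGraph.Walk.length_cons] at hp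

lemma dist_eq_two_iff (G : SimpleGraph V) (x y : V) :
    G.dist x y = 2 ↔ x ≠ y ∧ ¬ G.Adj x y ∧ ∃ z, G.Adj x z ∧ G.Adj z y := by
  constructor
  · intro h
    have hnz : G.dist x y ≠ 0 := by omega
    have hne : x ≠ y := (SimpleGraph.dist_ne_zero_iff_ne_and_reachable.mp hnz).1
    have hr : G.Reachable x y := (SimpleGraph.dist_ne_zero_iff_ne_and_reachable.mp hnz).2
    obtain ⟨p, hp⟩ := hr.exists_walk_length_eq_dist
    rw [h] at hp
    refine ⟨hne, fun hadj => ?_, adj_chain_of_walk_length_two p hp⟩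
    have : G.dist x y = 1 := SimpleGraph.dist_eq_one_iff_adj.mpr hadj
    omega
  · rintro ⟨hne, hnadj, z, h1, h2⟩
    have hle : G.dist x y ≤ 2 := by
      simpa using SimpleGraph.dist_le
        (SimpleGraph.Walk.cons h1 (SimpleGraph.Walk.cons h2 SimpleGraph.Walk.nil))
    have h0 : G.dist x y ≠ 0 := by
      rw [SimpleGraph.dist_ne_zero_iff_ne_and_reachable]
      exact ⟨hne, (h1.reachable).trans h2.reachable⟩
    have h1' : G.dist x y ≠ 1 := fun hd => hnadj (SimpleGraph.dist_eq_one_iff_adj.mp hd)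
    omega

lemma reachable_of_chain {G : SimpleGraph V} {x y : V}
    (h : x = y ∨ G.Adj x y ∨ ∃ z, G.Adj x z ∧ G.Adj z y) : G.Reachable x y := by
  rcases h with rfl | h | ⟨z, h1, h2⟩
  · exact ⟨SimpleGraph.Walk.nil⟩
  · exact h.reachable
  · exact h1.reachable.trans h2.reachable

lemma dist_le_two (G : SimpleGraph V)
    (h : ∀ x y : V, x = y ∨ G.Adj x y ∨ ∃ z, G.Adj x z ∧ G.Adj z y) (x y : V) :
    G.dist x y ≤ 2 := by
  rcases h x y with h | h | ⟨z, h1, h2⟩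
  · subst h; simp [SimpleGraph.dist_self]
  · have : G.dist x y = 1 := SimpleGraph.dist_eq_one_iff_adj.mpr h
    omega
  · simpa using SimpleGraph.dist_le
      (SimpleGraph.Walk.cons h1 (SimpleGraph.Walk.cons h2 SimpleGraph.Walk.nil))

/- ### Qspd lemmas -/

lemma mem_Qspd {V : Type*} [Fintype V] (G : SimpleGraph V) (v u : V) (k : ℕ) :
    u ∈ Qspd G v k ↔ G.Reachable v u ∧ G.dist v u = k := by
  simp [Qspd]

lemma Qspd_one {V : Type*} [Fintype V] [DecidableEq V] (G : SimpleGraph V)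
    [DecidableRel G.Adj] (v : V) : Qspd G v 1 = G.neighborFinset v := by
  ext u
  rw [mem_Qspd, mem_neighborFinset]
  constructor
  · rintro ⟨-, h⟩; exact SimpleGraph.dist_eq_one_iff_adj.mp h
  · intro h; exact ⟨h.reachable, SimpleGraph.dist_eq_one_iff_adj.mpr h⟩

lemma Qspd_two {V : Type*} [Fintype V] [DecidableEq V] (G : SimpleGraph V)
    [DecidableRel G.Adj] (v : V) :
    Qspd G v 2 = Finset.univ.filter
      (fun u => v ≠ u ∧ ¬ G.Adj v u ∧ ∃ z, G.Adj v z ∧ G.Adj z u) := by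
  ext u
  rw [mem_Qspd, Finset.mem_filter, dist_eq_two_iff]
  constructor
  · rintro ⟨hr, h⟩; exact ⟨Finset.mem_univ u, h⟩
  · rintro ⟨-, h⟩
    exact ⟨reachable_of_chain (Or.inr (Or.inr h.2.2)), h⟩

lemma Qspd_eq_empty {V : Type*} [Fintype V] (G : SimpleGraph V)
    (h : ∀ x y : V, G.dist x y ≤ 2) (v : V) {k : ℕ} (hk : 3 ≤ k) :
    Qspd G v k = ∅ := by
  ext u
  simp only [mem_Qspd, Finset.notMem_empty, iff_false]
  rintro ⟨-, hd⟩
  have := h v u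
  omega

/- ### generic positive lemmas -/

lemma khop_of_card_eq {V1 V2 : Type*} [Fintype V1] [Fintype V2]
    (G1 : SimpleGraph V1) (G2 : SimpleGraph V2)
    (H : ∀ (x : V1) (y : V2) (k : ℕ), 1 ≤ k → (Qspd G1 x k).card = (Qspd G2 y k).card) :
    ∀ K l (x : V1) (y : V2), KhopEquiv K G1 G2 l x y := by
  intro K l
  induction l with
  | zero => intro x y; trivial
  | succ l ih =>
    intro x y
    refine ⟨ih x y, fun k hk1 _ => ?_⟩
    have hc : Fintype.card {w // w ∈ Qspd G1 x k} = Fintype.card {w // w ∈ Qspd G2 y k} := by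
      rw [Fintype.card_coe, Fintype.card_coe]; exact H x y k hk1
    exact ⟨Fintype.equivOfCardEq hc, fun w => ih _ _⟩

lemma de1_of_rel {V1 V2 : Type*} (G1 : SimpleGraph V1) (v1 : V1)
    (G2 : SimpleGraph V2) (v2 : V2) (R : V1 → V2 → Prop)
    (h0 : ∀ x y, R x y → G1.dist v1 x = G2.dist v2 y ∧ (G1.Reachable v1 x ↔ G2.Reachable v2 y))
    (h1 : ∀ x y, R x y → ∃ σ : G1.neighborSet x ≃ G2.neighborSet y, ∀ w, R w.1 (σ w).1) :
    ∀ l x y, R x y → DE1Equiv G1 v1 G2 v2 l x y := by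
  intro l
  induction l with
  | zero => intro x y h; exact h0 x y h
  | succ l ih =>
    intro x y h
    refine ⟨ih x y h, ?_⟩
    obtain ⟨σ, hσ⟩ := h1 x y h
    exact ⟨σ, fun w => ih _ _ (hσ w)⟩

/- ### color-preserving equivalences from fiberwise card equality -/

lemma exists_color_equiv {α β C : Type*} [Fintype α] [Fintype β] [DecidableEq α]
    [DecidableEq β] [DecidableEq C]
    (s : Finset α) (t : Finset β) (f : α → C) (g : β → C)
    (h : ∀ c, (s.filter (fun a => f a = c)).card = (t.filter (fun b => g b = c)).card) :
    ∃ σ : {a // a ∈ s} ≃ {b // b ∈ t}, ∀ a, g (σ a).1 = f a.1 := by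
  classical
  have e1 : ∀ c : C, {a : {x // x ∈ s} // f a.1 = c} ≃ {x // x ∈ s.filter (fun a => f a = c)} :=
    fun c =>
    { toFun := fun a => ⟨a.1.1, Finset.mem_filter.mpr ⟨a.1.2, a.2⟩⟩
      invFun := fun x => ⟨⟨x.1, (Finset.mem_filter.mp x.2).1⟩, (Finset.mem_filter.mp x.2).2⟩
      left_inv := fun a => rfl
      right_inv := fun x => rfl }
  have e2 : ∀ c : C, {b : {y // y ∈ t} // g b.1 = c} ≃ {y // y ∈ t.filter (fun b => g b = c)} :=
    fun c =>
    { toFun := fun a => ⟨a.1.1, Finset.mem_filter.mpr ⟨a.1.2, a.2⟩⟩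
      invFun := fun x => ⟨⟨x.1, (Finset.mem_filter.mp x.2).1⟩, (Finset.mem_filter.mp x.2).2⟩
      left_inv := fun a => rfl
      right_inv := fun x => rfl }
  have e : ∀ c : C, {a : {x // x ∈ s} // f a.1 = c} ≃ {b : {y // y ∈ t} // g b.1 = c} :=
    fun c => (e1 c).trans ((Fintype.equivOfCardEq (by
      rw [Fintype.card_coe, Fintype.card_coe]; exact h c)).trans (e2 c).symm)
  refine ⟨(Equiv.sigmaFiberEquiv (fun a : {x // x ∈ s} => f a.1)).symm.trans
    ((Equiv.sigmaCongrRight e).trans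
      (Equiv.sigmaFiberEquiv (fun b : {y // y ∈ t} => g b.1))), ?_⟩
  intro a
  exact ((e (f a.1)) ⟨a, rfl⟩).2

/- ### the concrete graphs -/

def E1 : List (ℕ × ℕ) :=
  [(0,1),(0,2),(0,3),(0,4),(5,1),(5,2),(6,2),(6,3),(7,3),(7,4),(8,4),(8,1)]
def E2 : List (ℕ × ℕ) :=
  [(0,1),(0,2),(0,3),(0,4),(5,1),(5,2),(6,1),(6,2),(7,3),(7,4),(8,3),(8,4)]
def EP : List (ℕ × ℕ) :=
  [(0,1),(1,2),(0,2),(3,4),(4,5),(3,5),(0,3),(1,4),(2,5)]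
def EK : List (ℕ × ℕ) :=
  [(0,3),(0,4),(0,5),(1,3),(1,4),(1,5),(2,3),(2,4),(2,5)]

def GA : SimpleGraph (Fin 9) where
  Adj x y := (x.val, y.val) ∈ E1 ∨ (y.val, x.val) ∈ E1
  symm := ⟨fun x y h => h.symm⟩
  loopless := by
    have : ∀ x : Fin 9, ¬(((x.val, x.val) ∈ E1) ∨ ((x.val, x.val) ∈ E1)) := by decide
    exact ⟨fun x h => this x h⟩

def GB : SimpleGraph (Fin 9) where
  Adj x y := (x.val, y.val) ∈ E2 ∨ (y.val, x.val) ∈ E2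
  symm := ⟨fun x y h => h.symm⟩
  loopless := by
    have : ∀ x : Fin 9, ¬(((x.val, x.val) ∈ E2) ∨ ((x.val, x.val) ∈ E2)) := by decide
    exact ⟨fun x h => this x h⟩

def GP : SimpleGraph (Fin 6) where
  Adj x y := (x.val, y.val) ∈ EP ∨ (y.val, x.val) ∈ EP
  symm := ⟨fun x y h => h.symm⟩
  loopless := by
    have : ∀ x : Fin 6, ¬(((x.val, x.val) ∈ EP) ∨ ((x.val, x.val) ∈ EP)) := by decide
    exact ⟨fun x h => this x h⟩

def GK : SimpleGraph (Fin 6) where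
  Adj x y := (x.val, y.val) ∈ EK ∨ (y.val, x.val) ∈ EK
  symm := ⟨fun x y h => h.symm⟩
  loopless := by
    have : ∀ x : Fin 6, ¬(((x.val, x.val) ∈ EK) ∨ ((x.val, x.val) ∈ EK)) := by decide
    exact ⟨fun x h => this x h⟩

instance : DecidableRel GA.Adj := fun _ _ => inferInstanceAs (Decidable (_ ∨ _))
instance : DecidableRel GB.Adj := fun _ _ => inferInstanceAs (Decidable (_ ∨ _))
instance : DecidableRel GP.Adj := fun _ _ => inferInstanceAs (Decidable (_ ∨ _))
instance : DecidableRel GK.Adj := fun _ _ => inferInstanceAs (Decidable (_ ∨ _))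

def cl : Fin 9 → Fin 3 := fun x => if x.val = 0 then 0 else if x.val ≤ 4 then 1 else 2

def dcl : Fin 3 → ℕ := fun c => c.val

def nbrEquivA (x : Fin 9) : {a // a ∈ GA.neighborFinset x} ≃ ↥(GA.neighborSet x) :=
  Equiv.subtypeEquivRight (fun a => by simp)

def nbrEquivB (y : Fin 9) : {b // b ∈ GB.neighborFinset y} ≃ ↥(GB.neighborSet y) :=
  Equiv.subtypeEquivRight (fun b => by simp)

/- ### Part 1 : GA vs GB -/

lemma distA : ∀ x : Fin 9, GA.dist 0 x = dcl (cl x) := by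
  intro x
  fin_cases x <;>
  · first
    | exact SimpleGraph.dist_self
    | exact SimpleGraph.dist_eq_one_iff_adj.mpr (by decide)
    | exact (dist_eq_two_iff _ _ _).mpr (by decide)

lemma distB : ∀ x : Fin 9, GB.dist 0 x = dcl (cl x) := by
  intro x
  fin_cases x <;>
  · first
    | exact SimpleGraph.dist_self
    | exact SimpleGraph.dist_eq_one_iff_adj.mpr (by decide)
    | exact (dist_eq_two_iff _ _ _).mpr (by decide)

lemma reachA : ∀ x : Fin 9, GA.Reachable 0 x := by
  intro x
  apply reachable_of_chain
  revert x; decide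

lemma reachB : ∀ x : Fin 9, GB.Reachable 0 x := by
  intro x
  apply reachable_of_chain
  revert x; decide

lemma de1_part1 : ∀ l : ℕ, DE1Equiv GA 0 GB 0 l 0 0 := by
  have key := de1_of_rel GA 0 GB 0 (fun x y => cl x = cl y)
    (fun x y h => by
      refine ⟨?_, by simp [reachA x, reachB y]⟩
      rw [distA x, distB y, h])
    (fun x y h => by
      have hG : ∀ x y : Fin 9, cl x = cl y → ∀ c : Fin 3,
          ((GA.neighborFinset x).filter (fun a => cl a = c)).card
            = ((GB.neighborFinset y).filter (fun a => cl a = c)).card := by decide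
      have hcard := hG x y h
      obtain ⟨σ0, hσ0⟩ := exists_color_equiv
        (GA.neighborFinset x) (GB.neighborFinset y) cl cl hcard
      exact ⟨(nbrEquivA x).symm.trans (σ0.trans (nbrEquivB y)),
        fun w => (hσ0 ((nbrEquivA x).symm w)).symm⟩)
  intro l
  exact key l 0 0 rfl

lemma khop_ref_part1 : ¬ KhopEquiv 2 GA GB 2 0 0 := by
  intro h
  obtain ⟨-, h2⟩ := h
  obtain ⟨σ, hσ⟩ := h2 2 one_le_two le_rfl
  have h5 : (5 : Fin 9) ∈ Qspd GA 0 2 := by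
    rw [Qspd_two]; decide
  have hy : (σ ⟨5, h5⟩).1 ∈ Qspd GB 0 2 := (σ ⟨5, h5⟩).2
  have hy3 := (dist_eq_two_iff GB 0 (σ ⟨5, h5⟩).1).mp ((mem_Qspd GB 0 (σ ⟨5, h5⟩).1 2).mp hy).2
  obtain ⟨-, hkk⟩ := hσ ⟨5, h5⟩
  obtain ⟨τ, -⟩ := hkk 2 one_le_two le_rfl
  have hA : (Finset.univ.filter
      (fun u => (5 : Fin 9) ≠ u ∧ ¬ GA.Adj 5 u ∧ ∃ z, GA.Adj 5 z ∧ GA.Adj z u)).card = 3 := by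
    decide
  have hB : ∀ y : Fin 9, (0 : Fin 9) ≠ y → ¬ GB.Adj 0 y → (∃ z, GB.Adj 0 z ∧ GB.Adj z y) →
      (Finset.univ.filter
        (fun u => y ≠ u ∧ ¬ GB.Adj y u ∧ ∃ z, GB.Adj y z ∧ GB.Adj z u)).card = 2 := by
    decide
  have hAcard : (Qspd GA 5 2).card = 3 := by rw [Qspd_two]; exact hA
  have hBcard : (Qspd GB (σ ⟨5, h5⟩).1 2).card = 2 := by
    rw [Qspd_two]; convert hB _ hy3.1 hy3.2.1 hy3.2.2
  have hcc : (Qspd GA 5 2).card = (Qspd GB (σ ⟨5, h5⟩).1 2).card := by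
    rw [← Fintype.card_coe, ← Fintype.card_coe]
    exact Fintype.card_congr τ
  omega

/- ### Part 2 : GP vs GK -/

lemma distle2P : ∀ x y : Fin 6, GP.dist x y ≤ 2 :=
  dist_le_two GP (by decide)

lemma distle2K : ∀ x y : Fin 6, GK.dist x y ≤ 2 :=
  dist_le_two GK (by decide)

lemma khop_part2 : ∀ K l : ℕ, KhopEquiv K GP GK l 0 0 := by
  have H : ∀ (x y : Fin 6) (k : ℕ), 1 ≤ k → (Qspd GP x k).card = (Qspd GK y k).card := by
    intro x y k hk
    match k with
    | 1 =>
      rw [Qspd_one, Qspd_one]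
      have h1 : (GP.neighborFinset x).card = 3 := by revert x; decide
      have h2 : (GK.neighborFinset y).card = 3 := by revert y; decide
      rw [h1, h2]
    | 2 =>
      rw [Qspd_two, Qspd_two]
      have h1 : ∀ x : Fin 6, (Finset.univ.filter
          (fun u => x ≠ u ∧ ¬ GP.Adj x u ∧ ∃ z, GP.Adj x z ∧ GP.Adj z u)).card = 2 := by decide
      have h2 : ∀ y : Fin 6, (Finset.univ.filter
          (fun u => y ≠ u ∧ ¬ GK.Adj y u ∧ ∃ z, GK.Adj y z ∧ GK.Adj z u)).card = 2 := by decide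
      convert (h1 x).trans (h2 y).symm
    | (n + 3) =>
      rw [Qspd_eq_empty GP distle2P x (by omega), Qspd_eq_empty GK distle2K y (by omega)]
  exact fun K l => khop_of_card_eq GP GK H K l 0 0

lemma de1_ref_part2 : ¬ DE1Equiv GP 0 GK 0 2 0 0 := by
  intro hDE
  obtain ⟨-, σ, hσ⟩ := hDE
  have hw : (1 : Fin 6) ∈ GP.neighborSet 0 := by
    rw [SimpleGraph.mem_neighborSet]; decide
  obtain ⟨-, τ, hτ⟩ := hσ ⟨1, hw⟩
  have hu : GK.Adj 0 (σ ⟨1, hw⟩).1 := (σ ⟨1, hw⟩).2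
  have hz : (2 : Fin 6) ∈ GP.neighborSet 1 := by
    rw [SimpleGraph.mem_neighborSet]; decide
  have ht : GK.Adj (σ ⟨1, hw⟩).1 (τ ⟨2, hz⟩).1 := (τ ⟨2, hz⟩).2
  have hd : GP.dist 0 2 = GK.dist 0 (τ ⟨2, hz⟩).1 := (hτ ⟨2, hz⟩).1
  have h02 : GP.dist 0 2 = 1 := SimpleGraph.dist_eq_one_iff_adj.mpr (by decide)
  have hadj : GK.Adj 0 (τ ⟨2, hz⟩).1 :=
    SimpleGraph.dist_eq_one_iff_adj.mp (by rw [← hd, h02])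
  exact (by decide : ∀ u t : Fin 6, GK.Adj 0 u → GK.Adj u t → ¬ GK.Adj 0 t)
    _ _ hu ht hadj

/-- There exist graphs and vertices `v1`, `v2`, and `K > 1`, `L`,
such that K-hop spd refinement assigns `v1`, `v2` different colors at iteration `L`
while DE-1 (with targets `v1`, `v2`) assigns them equal representations at every
iteration; conversely there exist graphs and vertices `v1'`, `v2'` separated by DE-1
at some iteration but assigned equal colors by K-hop spd refinement for every `K` and
every iteration. -/
theorem khop_vs_DE1_incomparable :
    (∃ (n1 n2 : ℕ) (G1 : SimpleGraph (Fin n1)) (G2 : SimpleGraph (Fin n2))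
        (v1 : Fin n1) (v2 : Fin n2) (K L : ℕ), 1 < K ∧
        ¬ KhopEquiv K G1 G2 L v1 v2 ∧
        ∀ l : ℕ, DE1Equiv G1 v1 G2 v2 l v1 v2) ∧
    (∃ (n1 n2 : ℕ) (G1' : SimpleGraph (Fin n1)) (G2' : SimpleGraph (Fin n2))
        (v1' : Fin n1) (v2' : Fin n2),
        (∃ l : ℕ, ¬ DE1Equiv G1' v1' G2' v2' l v1' v2') ∧
        ∀ (K l : ℕ), KhopEquiv K G1' G2' l v1' v2') := by
  constructor
  · exact ⟨9, 9, GA, GB, 0, 0, 2, 2, one_lt_two, khop_ref_part1, de1_part1⟩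
  · exact ⟨6, 6, GP, GK, 0, 0, ⟨2, de1_ref_part2⟩, khop_part2⟩

end KHopStmt9
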